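/- Let A be a complex Banach space, γ : ℤ → ℝ with γ(n) > 0 for all n, and let 0 ≤ r ≤ t, α ∈ [0,1], and s = α·r + (1−α)·t. Let f : AddCircle 1 → A be integrable, and assume both families n ↦ (1 + γ(n)^2)^(r/2) ‖fourierCoeff f n‖ and n ↦ (1 + γ(n)^2)^(t/2) ‖fourierCoeff f n‖ are summable over ℤ. Then ∑'_{n} (1 + γ(n)^2)^(s/2) ‖fourierCoeff f n‖ ≤ (∑'_{n} (1 + γ(n)^2)^(r/2) ‖fourierCoeff f n‖)^α · (∑'_{n} (1 + γ(n)^2)^(t/2) ‖fourierCoeff f n‖)^(1−α). (Interpolation inequality ‖f‖_{𝔅^s_γ} ≤ ‖f‖_{𝔅^r_γ}^α ‖f‖_{𝔅^t_γ}^{1−α} on the torus.) -/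

import Mathlib

open MeasureTheory AddCircle

theorem barron_interpolation
    {A : Type} [NormedAddCommGroup A] [NormedSpace ℂ A] [CompleteSpace A]
    (γ : ℤ → ℝ) (hγ : ∀ n, 0 < γ n) (r t α s : ℝ) (hr : 0 ≤ r) (hrt : r ≤ t)
    (hα0 : 0 ≤ α) (hα1 : α ≤ 1) (hsdef : s = α * r + (1 - α) * t)
    (f : AddCircle (1 : ℝ) → A) (hf : Integrable f haarAddCircle)
    (hsumr : Summable fun n : ℤ => (1 + γ n ^ 2) ^ (r / 2) * ‖fourierCoeff f n‖)
    (hsumt : Summable fun n : ℤ => (1 + γ n ^ 2) ^ (t / 2) * ‖fourierCoeff f n‖) :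
    (∑' n : ℤ, (1 + γ n ^ 2) ^ (s / 2) * ‖fourierCoeff f n‖) ≤
      (∑' n : ℤ, (1 + γ n ^ 2) ^ (r / 2) * ‖fourierCoeff f n‖) ^ α *
        (∑' n : ℤ, (1 + γ n ^ 2) ^ (t / 2) * ‖fourierCoeff f n‖) ^ (1 - α) := by
  have hbase : ∀ n : ℤ, (0 : ℝ) < 1 + γ n ^ 2 := fun n => by positivity
  set a : ℤ → ℝ := fun n => (1 + γ n ^ 2) ^ (r / 2) * ‖fourierCoeff f n‖ with ha
  set b : ℤ → ℝ := fun n => (1 + γ n ^ 2) ^ (t / 2) * ‖fourierCoeff f n‖ with hb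
  have hanonneg : ∀ n, 0 ≤ a n := fun n =>
    mul_nonneg (Real.rpow_nonneg (hbase n).le _) (norm_nonneg _)
  have hbnonneg : ∀ n, 0 ≤ b n := fun n =>
    mul_nonneg (Real.rpow_nonneg (hbase n).le _) (norm_nonneg _)
  have hkey : ∀ n : ℤ,
      (1 + γ n ^ 2) ^ (s / 2) * ‖fourierCoeff f n‖ = a n ^ α * b n ^ (1 - α) := by
    intro n
    have h1 : (1 + γ n ^ 2) ^ (s / 2)
        = ((1 + γ n ^ 2) ^ (r / 2)) ^ α * ((1 + γ n ^ 2) ^ (t / 2)) ^ (1 - α) := by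
      rw [← Real.rpow_mul (hbase n).le, ← Real.rpow_mul (hbase n).le,
        ← Real.rpow_add (hbase n)]
      congr 1
      rw [hsdef]; ring
    have h2 : ‖fourierCoeff f n‖ = ‖fourierCoeff f n‖ ^ α * ‖fourierCoeff f n‖ ^ (1 - α) := by
      rw [← Real.rpow_add_of_nonneg (norm_nonneg _) hα0 (by linarith),
        add_sub_cancel, Real.rpow_one]
    rw [ha, hb]
    simp only []
    rw [Real.mul_rpow (Real.rpow_nonneg (hbase n).le _) (norm_nonneg _),
      Real.mul_rpow (Real.rpow_nonneg (hbase n).le _) (norm_nonneg _)]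
    calc (1 + γ n ^ 2) ^ (s / 2) * ‖fourierCoeff f n‖
        = (((1 + γ n ^ 2) ^ (r / 2)) ^ α * ((1 + γ n ^ 2) ^ (t / 2)) ^ (1 - α)) *
          (‖fourierCoeff f n‖ ^ α * ‖fourierCoeff f n‖ ^ (1 - α)) := by rw [← h1, ← h2]
      _ = ((1 + γ n ^ 2) ^ (r / 2)) ^ α * ‖fourierCoeff f n‖ ^ α *
          (((1 + γ n ^ 2) ^ (t / 2)) ^ (1 - α) * ‖fourierCoeff f n‖ ^ (1 - α)) := by ring
  rcases eq_or_lt_of_le hα0 with hα0' | hα0'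
  · have hst : s = t := by rw [hsdef, ← hα0']; ring
    simp only [hst, ← hα0', Real.rpow_zero, sub_zero, Real.rpow_one, one_mul, hb, le_refl]
  rcases eq_or_lt_of_le hα1 with hα1' | hα1'
  · have hst : s = r := by rw [hsdef, hα1']; ring
    simp only [hst, hα1', Real.rpow_one, sub_self, Real.rpow_zero, mul_one, ha, le_refl]
  -- main case 0 < α < 1
  have hpq : (1 / α).HolderConjugate (1 / (1 - α)) := by
    rw [Real.holderConjugate_iff]
    constructor
    · rw [lt_div_iff₀ hα0', one_mul]; exact hα1'
    · rw [one_div, one_div, inv_inv, inv_inv]; ring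
  have hαne : α ≠ 0 := ne_of_gt hα0'
  have h1αne : (1 : ℝ) - α ≠ 0 := by linarith
  have hfa : (fun n : ℤ => (a n ^ α) ^ (1 / α)) = a := by
    funext n
    rw [one_div, Real.rpow_rpow_inv (hanonneg n) hαne]
  have hfb : (fun n : ℤ => (b n ^ (1 - α)) ^ (1 / (1 - α))) = b := by
    funext n
    rw [one_div, Real.rpow_rpow_inv (hbnonneg n) h1αne]
  have hsum_a : Summable fun n : ℤ => (a n ^ α) ^ (1 / α) := by rw [hfa]; exact hsumr
  have hsum_b : Summable fun n : ℤ => (b n ^ (1 - α)) ^ (1 / (1 - α)) := by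
    rw [hfb]; exact hsumt
  have := Real.inner_le_Lp_mul_Lq_tsum_of_nonneg hpq
    (fun n => Real.rpow_nonneg (hanonneg n) α)
    (fun n => Real.rpow_nonneg (hbnonneg n) (1 - α)) hsum_a hsum_b
  rw [hfa, hfb] at this
  simp only [one_div, inv_inv] at this
  calc (∑' n : ℤ, (1 + γ n ^ 2) ^ (s / 2) * ‖fourierCoeff f n‖)
      = ∑' n : ℤ, a n ^ α * b n ^ (1 - α) := by exact tsum_congr hkey
    _ ≤ (∑' n, a n) ^ α * (∑' n, b n) ^ (1 - α) := this
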